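/- Let V be a vector space over a field 𝕂 and let g be a linear automorphism of V such that g − id has finite rank. If E₁ and E₂ are finite-dimensional g-invariant subspaces of V, each containing the range of g − id, then the determinant of the restriction of g to E₁ equals the determinant of the restriction of g to E₂. (Hence det(g) := det(g|_E) is well defined for finite rank perturbations g of the identity, independently of the choice of such a subspace E.) -/

import Mathlib

open Matrix

/-- Key lemma: on a finite-dimensional space, if `f - id` has range inside an
`f`-invariant subspace `E`, then `det f = det (f|_E)`. -/
lemma det_eq_det_restrict {𝕂 : Type*} [Field 𝕂] {W : Type*} [AddCommGroup W] [Module 𝕂 W]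
    [FiniteDimensional 𝕂 W] (f : W →ₗ[𝕂] W) (E : Submodule 𝕂 W)
    (hr : ∀ x : W, f x - x ∈ E) (hinv : ∀ x ∈ E, f x ∈ E) :
    LinearMap.det f = LinearMap.det (f.restrict hinv) := by
  obtain ⟨C, hC⟩ := Submodule.exists_isCompl E
  haveI : FiniteDimensional 𝕂 E := FiniteDimensional.finiteDimensional_submodule E
  haveI : FiniteDimensional 𝕂 C := FiniteDimensional.finiteDimensional_submodule C
  set bE := Module.finBasis 𝕂 E
  set bC := Module.finBasis 𝕂 C
  set e := Submodule.prodEquivOfIsCompl E C hC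
  set b : Module.Basis (Fin (Module.finrank 𝕂 E) ⊕ Fin (Module.finrank 𝕂 C)) 𝕂 W :=
    (bE.prod bC).map e
  -- repr facts
  have hreprE : ∀ (x : W) (hx : x ∈ E) (i),
      b.repr x (Sum.inl i) = bE.repr ⟨x, hx⟩ i := by
    intro x hx i
    have : e.symm x = (⟨x, hx⟩, 0) := Submodule.prodEquivOfIsCompl_symm_apply_left E C hC (⟨x, hx⟩ : E)
    simp [b, Module.Basis.map_repr, this, Module.Basis.prod_repr_inl]
  have hreprC : ∀ (x : W) (hx : x ∈ E) (i),
      b.repr x (Sum.inr i) = 0 := by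
    intro x hx i
    have : e.symm x = (⟨x, hx⟩, 0) := Submodule.prodEquivOfIsCompl_symm_apply_left E C hC (⟨x, hx⟩ : E)
    simp [b, Module.Basis.map_repr, this, Module.Basis.prod_repr_inr]
  set M := LinearMap.toMatrix b b f with hM
  have hblock : M = Matrix.fromBlocks (LinearMap.toMatrix bE bE (f.restrict hinv))
      (M.toBlocks₁₂) 0 1 := by
    ext i j
    cases i with
    | inl i =>
      cases j with
      | inl j =>
        have hbj : (b (Sum.inl j) : W) ∈ E := by
          have : b (Sum.inl j) = (bE j : W) := by
            simp [b, e, Module.Basis.map_apply, Module.Basis.prod_apply, Submodule.coe_prodEquivOfIsCompl']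
          rw [this]; exact (bE j).2
        rw [hM]
        simp only [LinearMap.toMatrix_apply, Matrix.fromBlocks_apply₁₁]
        rw [hreprE (f (b (Sum.inl j))) (hinv _ hbj)]
        have hb : b (Sum.inl j) = (bE j : W) := by
          simp [b, e, Module.Basis.map_apply, Module.Basis.prod_apply, Submodule.coe_prodEquivOfIsCompl']
        have : (⟨f (b (Sum.inl j)), hinv _ hbj⟩ : E) = (f.restrict hinv) (bE j) := by
          apply Subtype.ext
          simp [LinearMap.restrict_apply, hb]
        rw [this]
      | inr j => simp [Matrix.toBlocks₁₂]
    | inr i =>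
      cases j with
      | inl j =>
        have hbj : (b (Sum.inl j) : W) ∈ E := by
          have : b (Sum.inl j) = (bE j : W) := by
            simp [b, e, Module.Basis.map_apply, Module.Basis.prod_apply, Submodule.coe_prodEquivOfIsCompl']
          rw [this]; exact (bE j).2
        rw [hM]
        simp only [LinearMap.toMatrix_apply, Matrix.fromBlocks_apply₂₁, Matrix.zero_apply]
        exact hreprC _ (hinv _ hbj) i
      | inr j =>
        rw [hM]
        simp only [LinearMap.toMatrix_apply, Matrix.fromBlocks_apply₂₂]
        have hdecomp : f (b (Sum.inr j)) = (f (b (Sum.inr j)) - b (Sum.inr j)) + b (Sum.inr j) := by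
          abel
        rw [hdecomp, map_add, Finsupp.add_apply, hreprC _ (hr _), zero_add,
          b.repr_self_apply]
        simp [Matrix.one_apply, Sum.inr.injEq, eq_comm]
  calc LinearMap.det f = M.det := (LinearMap.det_toMatrix b f).symm
    _ = _ := by rw [hblock, Matrix.det_fromBlocks_zero₂₁, Matrix.det_one, mul_one,
          LinearMap.det_toMatrix]

/-- If `E ≤ F`, both invariant under `g`, with `g - id` ranging in `E`, and `F`
finite-dimensional, then the determinants of the restrictions agree. -/
lemma det_restrict_le {𝕂 : Type*} [Field 𝕂] {V : Type*} [AddCommGroup V] [Module 𝕂 V]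
    (g : V →ₗ[𝕂] V) (E F : Submodule 𝕂 V) [FiniteDimensional 𝕂 F] (hEF : E ≤ F)
    (hr : ∀ x : V, g x - x ∈ E) (hinvE : ∀ x ∈ E, g x ∈ E) (hinvF : ∀ x ∈ F, g x ∈ F) :
    LinearMap.det (g.restrict hinvE) = LinearMap.det (g.restrict hinvF) := by
  set f := g.restrict hinvF
  set p : Submodule 𝕂 F := E.comap F.subtype with hp
  have hrp : ∀ x : F, f x - x ∈ p := by
    intro x
    simp only [hp, Submodule.mem_comap, Submodule.coe_subtype, AddSubgroupClass.coe_sub]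
    exact hr (x : V)
  have hinvp : ∀ y ∈ p, f y ∈ p := by
    intro y hy
    simp only [hp, Submodule.mem_comap, Submodule.coe_subtype] at hy ⊢
    exact hinvE _ hy
  have h1 : LinearMap.det f = LinearMap.det (f.restrict hinvp) :=
    det_eq_det_restrict f p hrp hinvp
  set e : p ≃ₗ[𝕂] E := Submodule.comapSubtypeEquivOfLe hEF
  have h2 : g.restrict hinvE = (e : p →ₗ[𝕂] E) ∘ₗ (f.restrict hinvp) ∘ₗ (e.symm : E →ₗ[𝕂] p) := by
    ext x
    rfl
  rw [h2, LinearMap.det_conj, ← h1]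


/-- Let `V` be a vector space over a field `𝕂` and `g` a linear
automorphism of `V` with `g − id` of finite rank.  If `E₁`, `E₂` are finite-dimensional
`g`-invariant subspaces each containing the range of `g − id`, then the determinants of the
restrictions of `g` to `E₁` and to `E₂` agree: `det g` is well defined for finite rank
perturbations of the identity. -/
theorem stmt_6 {𝕂 : Type*} [Field 𝕂] {V : Type*} [AddCommGroup V] [Module 𝕂 V]
    (g : V ≃ₗ[𝕂] V)
    (hfr : FiniteDimensional 𝕂 (LinearMap.range (g.toLinearMap - LinearMap.id)))
    (E₁ E₂ : Submodule 𝕂 V)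
    (hE₁fin : FiniteDimensional 𝕂 E₁) (hE₂fin : FiniteDimensional 𝕂 E₂)
    (hr₁ : LinearMap.range (g.toLinearMap - LinearMap.id) ≤ E₁)
    (hr₂ : LinearMap.range (g.toLinearMap - LinearMap.id) ≤ E₂)
    (hinv₁ : ∀ x ∈ E₁, g.toLinearMap x ∈ E₁)
    (hinv₂ : ∀ x ∈ E₂, g.toLinearMap x ∈ E₂) :
    LinearMap.det (g.toLinearMap.restrict hinv₁) =
      LinearMap.det (g.toLinearMap.restrict hinv₂) := by
  have hr₁' : ∀ x : V, g x - x ∈ E₁ := fun x =>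
    hr₁ ⟨x, by simp [LinearMap.sub_apply]⟩
  have hr₂' : ∀ x : V, g x - x ∈ E₂ := fun x =>
    hr₂ ⟨x, by simp [LinearMap.sub_apply]⟩
  set F := E₁ ⊔ E₂ with hF
  haveI : FiniteDimensional 𝕂 F := Submodule.finiteDimensional_sup E₁ E₂
  have hinvF : ∀ x ∈ F, g.toLinearMap x ∈ F := by
    intro x hx
    have : g.toLinearMap x = (g x - x) + x := by abel
    rw [this]
    exact F.add_mem (le_sup_left (a := E₁) (hr₁' x)) hx
  rw [det_restrict_le g.toLinearMap E₁ F le_sup_left hr₁' hinv₁ hinvF,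
    det_restrict_le g.toLinearMap E₂ F le_sup_right hr₂' hinv₂ hinvF]
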